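/- Let R be a commutative Noetherian ring, I an ideal of R, E an injective R-module, and K a submodule of E. Setting L = E/K, one has (L/Γ_I(L)) ⊗_R R/I = 0, i.e., L/Γ_I(L) = I·(L/Γ_I(L)). -/

import Mathlib

open CategoryTheory

noncomputable section

universe u

/-- `Tor_i^R(A, B)` as an object of `ModuleCat R`. -/
def TorMod (R : Type u) [CommRing R] (i : ℕ) (A B : ModuleCat.{u} R) : ModuleCat.{u} R :=
  ((Tor (ModuleCat.{u} R) i).obj A).obj B

/-- `Ext^i_R(A, B)` as an object of `ModuleCat R`. -/
def ExtMod (R : Type u) [CommRing R] (i : ℕ) (A B : ModuleCat.{u} R) : ModuleCat.{u} R :=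
  ((Ext R (ModuleCat.{u} R) i).obj (Opposite.op A)).obj B

/-- `H^i_I(M)`, the `i`-th local cohomology of `M` with support in `I`. -/
def LC (R : Type u) [CommRing R] (I : Ideal R) (i : ℕ) (M : ModuleCat.{u} R) : ModuleCat.{u} R :=
  (localCohomology I i).obj M

/-- `M` is `I`-cofinite: `Supp M ⊆ V(I)` and all `Ext^i_R(R/I, M)` are finitely generated. -/
def IsCofinite (R : Type u) [CommRing R] (I : Ideal R) (M : ModuleCat.{u} R) : Prop :=
  Module.support R M ⊆ PrimeSpectrum.zeroLocus (I : Set R) ∧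
    ∀ i : ℕ, Module.Finite R (ExtMod R i (ModuleCat.of R (R ⧸ I)) M)

/-- `Γ_I(M) = ⋃ₙ (0 :_M Iⁿ)`, the `I`-torsion submodule of `M`. -/
def torsionGamma (R : Type u) [CommRing R] (I : Ideal R) (M : Type u) [AddCommGroup M]
    [Module R M] : Submodule R M :=
  ⨆ n : ℕ, Submodule.torsionBySet R M ((I ^ n : Ideal R) : Set R)

theorem stmt2 (R : Type u) [CommRing R] [IsNoetherianRing R] (I : Ideal R)
    (E : Type u) [AddCommGroup E] [Module R E] (hE : Module.Injective R E)
    (K : Submodule R E) :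
    I • (⊤ : Submodule R ((E ⧸ K) ⧸ torsionGamma R I (E ⧸ K))) = ⊤ := by
  classical
  set L := E ⧸ K
  set Γ : Submodule R L := torsionGamma R I L with hΓ
  set π : E →ₗ[R] (L ⧸ Γ) := Γ.mkQ.comp K.mkQ with hπ
  have hπsurj : Function.Surjective π :=
    (Γ.mkQ_surjective).comp (K.mkQ_surjective)
  -- elements killed by a power of I are killed by π
  have hker : ∀ (n : ℕ) (e : E), (∀ b ∈ (I ^ n : Ideal R), b • e = 0) → π e = 0 := by
    intro n e he
    have h1 : K.mkQ e ∈ Submodule.torsionBySet R L ((I ^ n : Ideal R) : Set R) := by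
      rw [Submodule.mem_torsionBySet_iff]
      rintro ⟨a, ha⟩
      show a • K.mkQ e = 0
      rw [← map_smul, he a ha, map_zero]
    have h2 : K.mkQ e ∈ Γ := by
      rw [hΓ]
      exact (le_iSup (fun n : ℕ => Submodule.torsionBySet R L ((I ^ n : Ideal R) : Set R)) n) h1
    exact
      (Submodule.Quotient.mk_eq_zero Γ).2 h2
  -- the annihilator of I
  set A : Ideal R := Submodule.annihilator I with hA
  have hIA : I • A = (⊥ : Ideal R) := by
    refine le_antisymm (Submodule.smul_le.2 ?_) bot_le
    intro r hr a ha
    have := Submodule.mem_annihilator.1 ha r hr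
    simpa [smul_eq_mul, mul_comm] using this
  -- Artin-Rees: A ⊓ I^n = 0 for some n ≥ 1
  obtain ⟨k, hk⟩ := Ideal.exists_pow_inf_eq_pow_smul I (A : Submodule R R)
  set n : ℕ := k + 1 with hn
  have hcap : ∀ a : R, a ∈ A → a ∈ (I ^ n : Ideal R) → a = 0 := by
    intro a haA haI
    have h1 : a ∈ (I ^ n • ⊤ ⊓ A : Submodule R R) := by
      refine ⟨?_, haA⟩
      simpa using Submodule.smul_mem_smul haI (Submodule.mem_top (x := (1 : R)))
    rw [hk n (by omega)] at h1
    have h2 : a ∈ (I ^ (n - k) • (I ^ k • ⊤ ⊓ A) : Submodule R R) := h1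
    have h3 : (I ^ (n - k) • (I ^ k • ⊤ ⊓ A) : Submodule R R) ≤ I • A := by
      have : n - k = 1 := by omega
      rw [this, pow_one]
      exact Submodule.smul_mono le_rfl inf_le_right
    have h4 : a ∈ (I • A : Ideal R) := h3 h2
    rw [hIA] at h4
    simpa using h4
  -- generators of I
  obtain ⟨s, hs⟩ : I.FG := IsNoetherian.noetherian I
  -- main goal
  rw [eq_top_iff]
  rintro x -
  obtain ⟨e, rfl⟩ := hπsurj x
  -- Step 1: construct γ with a•γ = a•e for a ∈ A and I^n • γ = 0
  have step1 : ∃ γ : E, (∀ a ∈ A, a • γ = a • e) ∧ (∀ b ∈ (I ^ n : Ideal R), b • γ = 0) := by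
    set ι : A →ₗ[R] (R ⧸ (I ^ n : Ideal R)) := (I ^ n : Ideal R).mkQ.comp A.subtype with hι
    have hιinj : Function.Injective ι := by
      rw [← LinearMap.ker_eq_bot, eq_bot_iff]
      rintro ⟨a, haA⟩ hker'
      have h0 : (Submodule.Quotient.mk a : R ⧸ (I ^ n : Ideal R)) = 0 := hker'
      have h1 : a ∈ (I ^ n : Ideal R) := (Submodule.Quotient.mk_eq_zero _).1 h0
      rw [Submodule.mem_bot]
      exact Subtype.ext (hcap a haA h1)
    set g : A →ₗ[R] E := (LinearMap.toSpanSingleton R E e).comp A.subtype with hg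
    obtain ⟨F, hF⟩ := hE.out ι hιinj g
    refine ⟨F (Submodule.Quotient.mk 1), ?_, ?_⟩
    · intro a ha
      have h1 : a • (Submodule.Quotient.mk (1 : R) : R ⧸ (I ^ n : Ideal R)) =
          ι ⟨a, ha⟩ := by
        rw [← Submodule.Quotient.mk_smul, smul_eq_mul, mul_one]
        rfl
      rw [← map_smul, h1, hF]
      simp [hg, LinearMap.toSpanSingleton_apply]
    · intro b hb
      have h1 : b • (Submodule.Quotient.mk (1 : R) : R ⧸ (I ^ n : Ideal R)) = 0 := by
        rw [← Submodule.Quotient.mk_smul, Submodule.Quotient.mk_eq_zero]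
        simpa using hb
      rw [← map_smul, h1, map_zero]
  obtain ⟨γ, hγA, hγn⟩ := step1
  set e' : E := e - γ with he'
  have he'A : ∀ a ∈ A, a • e' = 0 := by
    intro a ha
    rw [he', smul_sub, hγA a ha, sub_self]
  -- Step 2: e' ∈ I • ⊤
  have step2 : e' ∈ (I • ⊤ : Submodule R E) := by
    set σ : R →ₗ[R] (↥s → R) :=
      LinearMap.pi (fun b : ↥s => ((b : R) • LinearMap.id : R →ₗ[R] R)) with hσ
    have hσapp : ∀ (r : R) (b : ↥s), σ r b = (b : R) * r := by
      intro r b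
      simp [hσ, smul_eq_mul]
    have hkerσ : A ≤ LinearMap.ker σ := by
      intro a ha
      rw [LinearMap.mem_ker]
      funext b
      have hbI : (b : R) ∈ I := by
        rw [← hs]; exact Ideal.subset_span b.2
      have := Submodule.mem_annihilator.1 ha (b : R) hbI
      rw [hσapp]
      simpa [smul_eq_mul, mul_comm] using this
    set ι₂ : (R ⧸ A) →ₗ[R] (↥s → R) := A.liftQ σ hkerσ with hι₂
    have hι₂inj : Function.Injective ι₂ := by
      rw [← LinearMap.ker_eq_bot, Submodule.ker_liftQ, eq_bot_iff, Submodule.map_le_iff_le_comap]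
      intro r hr
      have hr' : ∀ b ∈ I, b * r = 0 := by
        intro b hb
        rw [← hs] at hb
        induction hb using Submodule.span_induction with
        | mem z hz =>
            have h0 := congrFun (LinearMap.mem_ker.1 hr) (⟨z, Finset.mem_coe.1 hz⟩ : ↥s)
            rw [hσapp] at h0
            simpa using h0
        | zero => simp
        | add y z hy hz hy' hz' => rw [add_mul, hy', hz', add_zero]
        | smul c y hy hy' => rw [smul_eq_mul, mul_assoc, hy', mul_zero]
      have hrA : r ∈ A := Submodule.mem_annihilator.2 (by
        intro b hb; simpa [smul_eq_mul, mul_comm] using hr' b hb)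
      rw [Submodule.mem_comap, Submodule.mem_bot, Submodule.mkQ_apply,
        Submodule.Quotient.mk_eq_zero]
      exact hrA
    set h₂ : (R ⧸ A) →ₗ[R] E := A.liftQ (LinearMap.toSpanSingleton R E e') (by
      intro a ha
      simpa [LinearMap.toSpanSingleton_apply] using he'A a ha) with hh₂
    obtain ⟨F₂, hF₂⟩ := hE.out ι₂ hι₂inj h₂
    have key : e' = F₂ (fun b : ↥s => (b : R)) := by
      have h1 : h₂ (Submodule.Quotient.mk 1) = e' := by
        rw [hh₂, Submodule.liftQ_apply, LinearMap.toSpanSingleton_apply, one_smul]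
      have h2 : ι₂ (Submodule.Quotient.mk 1) = (fun b : ↥s => (b : R)) := by
        funext b
        rw [hι₂, Submodule.liftQ_apply, hσapp, mul_one]
      rw [← h1, ← hF₂, h2]
    rw [key, pi_eq_sum_univ (fun b : ↥s => (b : R)), map_sum]
    refine Submodule.sum_mem _ ?_
    intro b _
    rw [map_smul]
    have hbI : (b : R) ∈ I := by rw [← hs]; exact Ideal.subset_span b.2
    exact Submodule.smul_mem_smul hbI Submodule.mem_top
  -- Step 3: conclude
  have hπγ : π γ = 0 := hker n γ hγn
  have : π e = π e' := by
    rw [he', map_sub, hπγ, sub_zero]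
  rw [this]
  have : π e' ∈ Submodule.map π (I • ⊤ : Submodule R E) := ⟨e', step2, rfl⟩
  rw [Submodule.map_smul''] at this
  exact Submodule.smul_mono le_rfl le_top this
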